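/- Coercivity of nonnegative nonincreasing kernels (smooth case): let K ∈ C¹([0,T]) with K ≥ 0 and K' ≤ 0 on [0,T]. Then for every y ∈ C¹([0,T]), ∫₀ᵀ (K * y')(t) y(t) dt ≥ −(1/2) ‖K‖_{L¹(0,T)} y(0)², where (K * y')(t) = ∫₀ᵗ K(t-s) y'(s) ds. -/

import Mathlib

open MeasureTheory Set intervalIntegral

theorem aux_coercive (T : ℝ) (hT : 0 < T) (K K' y y' : ℝ → ℝ)
    (hKc : Continuous K) (hK'c : Continuous K') (hyc : Continuous y) (hy'c : Continuous y')
    (hKd : ∀ t ∈ Set.Ioo (0:ℝ) T, HasDerivAt K (K' t) t)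
    (hyd : ∀ t ∈ Set.Ioo (0:ℝ) T, HasDerivAt y (y' t) t)
    (hKnn : ∀ t, 0 ≤ K t) (hK'np : ∀ t, K' t ≤ 0) :
    (∫ t in (0:ℝ)..T, (∫ s in (0:ℝ)..t, K (t - s) * y' s) * y t)
      ≥ -(1/2) * (∫ x in (0:ℝ)..T, K x) * (y 0) ^ 2 := by
  set g : ℝ → ℝ := fun s => 2 * y s * y' s with hg
  have hgc : Continuous g := by fun_prop
  set F : ℝ → ℝ := fun t => ∫ s in (0:ℝ)..t, K (t - s) * y' s with hF
  set G : ℝ → ℝ := fun t => ∫ s in (0:ℝ)..t, K (t - s) * g s with hG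
  set I : ℝ → ℝ := fun u => ∫ x in (0:ℝ)..u, K x with hI
  -- continuity of parametric integrals
  have hFc : Continuous F :=
    intervalIntegral.continuous_parametric_intervalIntegral_of_continuous
      (f := fun t s => K (t - s) * y' s)
      (by apply Continuous.mul <;> fun_prop) continuous_id
  have hGc : Continuous G :=
    intervalIntegral.continuous_parametric_intervalIntegral_of_continuous
      (f := fun t s => K (t - s) * g s)
      (by apply Continuous.mul <;> fun_prop) continuous_id
  have hIc : Continuous I := by
    apply intervalIntegral.continuous_primitive
    exact fun a b => hKc.intervalIntegrable a b
  -- Step 1: pointwise inequality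
  have hpos : ∀ t ∈ Set.Icc (0:ℝ) T,
      0 ≤ ∫ s in (0:ℝ)..t, K (t - s) * (2 * (y t - y s) * y' s) := by
    intro t ht
    obtain ⟨ht0, htT⟩ := ht
    set A : ℝ → ℝ := fun s => K' (t - s) * -1 * (y t - y s) ^ 2 with hA
    set B : ℝ → ℝ := fun s => K (t - s) * (2 * (y t - y s) ^ 1 * -(y' s)) with hB
    have hAc : Continuous A := by fun_prop
    have hBc : Continuous B := by fun_prop
    have hQd : ∀ s ∈ Set.Ioo (0:ℝ) t,
        HasDerivWithinAt (fun s => K (t - s) * (y t - y s) ^ 2) (A s + B s) (Set.Ioi s) s := by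
      intro s hs
      have hsT : s ∈ Set.Ioo (0:ℝ) T := ⟨hs.1, lt_of_lt_of_le hs.2 htT⟩
      have hts : t - s ∈ Set.Ioo (0:ℝ) T := ⟨by linarith [hs.2], by linarith [hs.1]⟩
      have h1 : HasDerivAt (fun s => K (t - s)) (K' (t - s) * -1) s :=
        (hKd _ hts).comp s (by simpa using (hasDerivAt_id s).const_sub t)
      have h2 : HasDerivAt (fun s => (y t - y s) ^ 2)
          (2 * (y t - y s) ^ 1 * -(y' s)) s := by
        have := ((hyd s hsT).const_sub (y t)).pow 2
        exact this
      exact (h1.mul h2).hasDerivWithinAt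
    have hQc : ContinuousOn (fun s => K (t - s) * (y t - y s) ^ 2) (Set.Icc 0 t) := by fun_prop
    have hftc : (∫ s in (0:ℝ)..t, (A s + B s)) = - (K t * (y t - y 0) ^ 2) := by
      rw [integral_eq_sub_of_hasDeriv_right_of_le ht0 hQc hQd
        ((hAc.add hBc).intervalIntegrable _ _)]
      simp
    have hsplit : (∫ s in (0:ℝ)..t, (A s + B s))
        = (∫ s in (0:ℝ)..t, A s) + ∫ s in (0:ℝ)..t, B s :=
      integral_add (hAc.intervalIntegrable _ _) (hBc.intervalIntegrable _ _)
    have hAnn : 0 ≤ ∫ s in (0:ℝ)..t, A s := by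
      apply intervalIntegral.integral_nonneg ht0
      intro u hu
      have h0 := hK'np (t - u)
      have h1 : 0 ≤ K' (t - u) * -1 := by linarith
      simp only [hA]
      positivity
    have hKt : 0 ≤ K t * (y t - y 0) ^ 2 := mul_nonneg (hKnn t) (sq_nonneg _)
    have hEq : (∫ s in (0:ℝ)..t, K (t - s) * (2 * (y t - y s) * y' s))
        = - ∫ s in (0:ℝ)..t, B s := by
      rw [← intervalIntegral.integral_neg]
      apply intervalIntegral.integral_congr
      intro u hu
      simp only [hB]
      ring
    rw [hEq]
    linarith
  have hpt : ∀ t ∈ Set.Icc (0:ℝ) T, (1/2 : ℝ) * G t ≤ F t * y t := by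
    intro t ht
    have h1 : F t * (2 * y t) = ∫ s in (0:ℝ)..t, K (t - s) * y' s * (2 * y t) :=
      (intervalIntegral.integral_mul_const _ _).symm
    have h2 : F t * (2 * y t) - G t
        = ∫ s in (0:ℝ)..t, (K (t - s) * y' s * (2 * y t) - K (t - s) * g s) := by
      rw [h1, hG, ← intervalIntegral.integral_sub]
      · exact (by fun_prop : Continuous fun s => K (t - s) * y' s * (2 * y t)).intervalIntegrable _ _
      · exact (by fun_prop : Continuous fun s => K (t - s) * g s).intervalIntegrable _ _
    have h3 : (∫ s in (0:ℝ)..t, (K (t - s) * y' s * (2 * y t) - K (t - s) * g s))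
        = ∫ s in (0:ℝ)..t, K (t - s) * (2 * (y t - y s) * y' s) := by
      apply intervalIntegral.integral_congr
      intro u hu
      simp only [hg]
      ring
    have := hpos t ht
    rw [← h3, ← h2] at this
    linarith
  -- Step 2: integrate the pointwise inequality
  have hstep2 : (1/2 : ℝ) * (∫ t in (0:ℝ)..T, G t) ≤ ∫ t in (0:ℝ)..T, F t * y t := by
    have ha : IntervalIntegrable (fun t => (1/2 : ℝ) * G t) volume 0 T :=
      (by fun_prop : Continuous fun t => (1/2 : ℝ) * G t).intervalIntegrable _ _
    have hb : IntervalIntegrable (fun t => F t * y t) volume 0 T :=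
      (hFc.mul hyc).intervalIntegrable _ _
    have := intervalIntegral.integral_mono_on (le_of_lt hT) ha hb hpt
    rwa [intervalIntegral.integral_const_mul] at this
  -- Step 3: Fubini
  have hfub : (∫ t in (0:ℝ)..T, G t) = ∫ s in (0:ℝ)..T, I (T - s) * g s := by
    simp only [hG, hI]
    set μ : Measure ℝ := volume.restrict (Set.Ioc 0 T) with hμ
    set f : ℝ → ℝ → ℝ := fun t s => if s ≤ t then K (t - s) * g s else 0 with hf
    have huncurry : Function.uncurry f = Set.indicator {p : ℝ × ℝ | p.2 ≤ p.1}
        (fun p => K (p.1 - p.2) * g p.2) := by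
      funext p
      simp [Function.uncurry, hf, Set.indicator_apply, Set.mem_setOf_eq]
    have hmeas : AEStronglyMeasurable (Function.uncurry f) (μ.prod μ) := by
      rw [huncurry]
      exact (((hKc.comp (continuous_fst.sub continuous_snd)).mul
        (hgc.comp continuous_snd)).stronglyMeasurable.indicator
        (isClosed_le continuous_snd continuous_fst).measurableSet).aestronglyMeasurable
    obtain ⟨C₁, hC₁⟩ := (isCompact_Icc (a := -T) (b := T)).exists_bound_of_continuousOn
      hKc.continuousOn
    obtain ⟨C₂, hC₂⟩ := (isCompact_Icc (a := (0:ℝ)) (b := T)).exists_bound_of_continuousOn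
      hgc.continuousOn
    have hC₁0 : 0 ≤ C₁ := le_trans (norm_nonneg _) (hC₁ 0 (by constructor <;> linarith))
    have hC₂0 : 0 ≤ C₂ := le_trans (norm_nonneg _) (hC₂ 0 (by constructor <;> linarith))
    have hint : Integrable (Function.uncurry f) (μ.prod μ) := by
      apply (integrable_const (C₁ * C₂)).mono' hmeas
      have hbox : ∀ᵐ p ∂(μ.prod μ), p ∈ Set.Ioc (0:ℝ) T ×ˢ Set.Ioc (0:ℝ) T := by
        rw [hμ, Measure.prod_restrict]
        exact ae_restrict_mem (measurableSet_Ioc.prod measurableSet_Ioc)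
      filter_upwards [hbox] with p hp
      rcases hp with ⟨hp1, hp2⟩
      have hfp : Function.uncurry f p = if p.2 ≤ p.1 then K (p.1 - p.2) * g p.2 else 0 := rfl
      rw [hfp]
      by_cases h : p.2 ≤ p.1
      · rw [if_pos h]
        have h1 : p.1 - p.2 ∈ Set.Icc (-T) T :=
          ⟨by linarith [hp1.1, hp1.2, hp2.1, hp2.2], by linarith [hp1.1, hp1.2, hp2.1, hp2.2]⟩
        have h2 : p.2 ∈ Set.Icc (0:ℝ) T := ⟨le_of_lt hp2.1, hp2.2⟩
        calc ‖K (p.1 - p.2) * g p.2‖ = ‖K (p.1 - p.2)‖ * ‖g p.2‖ := norm_mul _ _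
          _ ≤ C₁ * C₂ := mul_le_mul (hC₁ _ h1) (hC₂ _ h2) (norm_nonneg _) hC₁0
      · rw [if_neg h]
        simpa using mul_nonneg hC₁0 hC₂0
    have hswap := integral_integral_swap hint
    have hL : (∫ t, ∫ s, f t s ∂μ ∂μ) = ∫ t in (0:ℝ)..T, ∫ s in (0:ℝ)..t, K (t - s) * g s := by
      rw [intervalIntegral.integral_of_le (le_of_lt hT)]
      apply setIntegral_congr_fun measurableSet_Ioc
      intro t ht
      show (∫ s, f t s ∂μ) = ∫ s in (0:ℝ)..t, K (t - s) * g s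
      have h1 : (fun s => f t s) = Set.indicator (Set.Iic t) (fun s => K (t - s) * g s) := by
        funext s
        by_cases h : s ≤ t
        · simp [hf, h, Set.indicator_of_mem (Set.mem_Iic.2 h)]
        · simp [hf, h, Set.indicator_of_notMem (by simpa using h : s ∉ Set.Iic t)]
      rw [h1, hμ, MeasureTheory.integral_indicator measurableSet_Iic,
        Measure.restrict_restrict measurableSet_Iic]
      have h2 : Set.Iic t ∩ Set.Ioc 0 T = Set.Ioc 0 t := by
        ext x
        simp only [Set.mem_inter_iff, Set.mem_Iic, Set.mem_Ioc]
        constructor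
        · rintro ⟨hx, hx0, _⟩; exact ⟨hx0, hx⟩
        · rintro ⟨hx0, hx⟩; exact ⟨hx, hx0, le_trans hx ht.2⟩
      rw [h2, intervalIntegral.integral_of_le ht.1.le]
    have hR : (∫ s, ∫ t, f t s ∂μ ∂μ)
        = ∫ s in (0:ℝ)..T, (∫ x in (0:ℝ)..(T - s), K x) * g s := by
      rw [intervalIntegral.integral_of_le (le_of_lt hT)]
      apply setIntegral_congr_fun measurableSet_Ioc
      intro s hs
      show (∫ t, f t s ∂μ) = (∫ x in (0:ℝ)..(T - s), K x) * g s
      have h1 : (fun t => f t s) = Set.indicator (Set.Ici s) (fun t => K (t - s) * g s) := by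
        funext t
        by_cases h : s ≤ t
        · simp [hf, h, Set.indicator_of_mem (Set.mem_Ici.2 h)]
        · simp [hf, h, Set.indicator_of_notMem (by simpa using h : t ∉ Set.Ici s)]
      rw [h1, hμ, MeasureTheory.integral_indicator measurableSet_Ici,
        Measure.restrict_restrict measurableSet_Ici]
      have h2 : Set.Ici s ∩ Set.Ioc 0 T = Set.Icc s T := by
        ext x
        simp only [Set.mem_inter_iff, Set.mem_Ici, Set.mem_Ioc, Set.mem_Icc]
        constructor
        · rintro ⟨hx, _, hxT⟩; exact ⟨hx, hxT⟩
        · rintro ⟨hx, hxT⟩; exact ⟨hx, lt_of_lt_of_le hs.1 hx, hxT⟩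
      rw [h2, integral_Icc_eq_integral_Ioc, ← intervalIntegral.integral_of_le hs.2,
        intervalIntegral.integral_mul_const,
        intervalIntegral.integral_comp_sub_right (fun x => K x) s]
      simp
    rw [← hL, hswap, hR]
  -- Step 4: integration by parts for the primitive
  have hIder : ∀ u : ℝ, HasDerivAt I (K u) u := by
    intro u
    exact intervalIntegral.integral_hasDerivAt_right (hKc.intervalIntegrable _ _)
      hKc.stronglyMeasurable.stronglyMeasurableAtFilter hKc.continuousAt
  have hRd : ∀ s ∈ Set.Ioo (0:ℝ) T,
      HasDerivWithinAt (fun s => y s ^ 2 * I (T - s))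
        (2 * y s ^ 1 * y' s * I (T - s) + y s ^ 2 * (K (T - s) * -1)) (Set.Ioi s) s := by
    intro s hs
    have h1 : HasDerivAt (fun s => y s ^ 2) (2 * y s ^ 1 * y' s) s := (hyd s hs).pow 2
    have h2 : HasDerivAt (fun s => I (T - s)) (K (T - s) * -1) s :=
      (hIder (T - s)).comp s (by simpa using (hasDerivAt_id s).const_sub T)
    exact (h1.mul h2).hasDerivWithinAt
  have hftc2 : (∫ s in (0:ℝ)..T,
      (2 * y s ^ 1 * y' s * I (T - s) + y s ^ 2 * (K (T - s) * -1)))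
      = - (y 0 ^ 2 * I T) := by
    rw [integral_eq_sub_of_hasDeriv_right_of_le (le_of_lt hT) (by fun_prop) hRd
      (((by fun_prop : Continuous fun s => 2 * y s ^ 1 * y' s * I (T - s)).add
        (by fun_prop : Continuous fun s => y s ^ 2 * (K (T - s) * -1))).intervalIntegrable _ _)]
    have h1 : I (T - T) = 0 := by simp [hI]
    have h0 : I (T - 0) = I T := by norm_num
    simp only [h1, h0]
    ring
  have hsplit2 : (∫ s in (0:ℝ)..T, I (T - s) * g s)
      = (∫ s in (0:ℝ)..T, (2 * y s ^ 1 * y' s * I (T - s) + y s ^ 2 * (K (T - s) * -1)))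
        + ∫ s in (0:ℝ)..T, y s ^ 2 * K (T - s) := by
    rw [← intervalIntegral.integral_add]
    · apply intervalIntegral.integral_congr
      intro u hu
      simp only [hg]
      ring
    · exact (by fun_prop : Continuous fun s => 2 * y s ^ 1 * y' s * I (T - s)
        + y s ^ 2 * (K (T - s) * -1)).intervalIntegrable _ _
    · exact (by fun_prop : Continuous fun s => y s ^ 2 * K (T - s)).intervalIntegrable _ _
  have hnn2 : 0 ≤ ∫ s in (0:ℝ)..T, y s ^ 2 * K (T - s) := by
    apply intervalIntegral.integral_nonneg (le_of_lt hT)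
    intro u hu
    exact mul_nonneg (sq_nonneg _) (hKnn _)
  have hJ : (∫ s in (0:ℝ)..T, I (T - s) * g s) ≥ - (y 0 ^ 2 * I T) := by
    rw [hsplit2, hftc2]
    linarith
  rw [ge_iff_le]
  calc -(1/2) * (∫ x in (0:ℝ)..T, K x) * y 0 ^ 2
      = (1/2 : ℝ) * (- (y 0 ^ 2 * I T)) := by rw [hI]; ring
    _ ≤ (1/2 : ℝ) * (∫ s in (0:ℝ)..T, I (T - s) * g s) := by linarith
    _ = (1/2 : ℝ) * (∫ t in (0:ℝ)..T, G t) := by rw [hfub]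
    _ ≤ ∫ t in (0:ℝ)..T, F t * y t := hstep2

/-- Coercivity of nonnegative nonincreasing kernels (smooth case): if
`K ∈ C¹([0,T])` with `K ≥ 0` and `K' ≤ 0` on `[0,T]`, then for every
`y ∈ C¹([0,T])`,
`∫₀ᵀ (K * y')(t) y(t) dt ≥ −(1/2) ‖K‖_{L¹(0,T)} y(0)²`. -/
theorem monotone_kernel_coercivity (T : ℝ) (hT : 0 < T) (K K' y y' : ℝ → ℝ)
    (hKdiff : ∀ t ∈ Set.Icc (0:ℝ) T, HasDerivWithinAt K (K' t) (Set.Icc 0 T) t)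
    (hK'cont : ContinuousOn K' (Set.Icc 0 T))
    (hKnonneg : ∀ t ∈ Set.Icc (0:ℝ) T, 0 ≤ K t)
    (hK'nonpos : ∀ t ∈ Set.Icc (0:ℝ) T, K' t ≤ 0)
    (hydiff : ∀ t ∈ Set.Icc (0:ℝ) T, HasDerivWithinAt y (y' t) (Set.Icc 0 T) t)
    (hy'cont : ContinuousOn y' (Set.Icc 0 T)) :
    (∫ t in (0:ℝ)..T, (∫ s in (0:ℝ)..t, K (t - s) * y' s) * y t)
      ≥ -(1/2) * (∫ t in Set.Ioc (0:ℝ) T, |K t|) * (y 0) ^ 2 := by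
  have hTle : (0:ℝ) ≤ T := hT.le
  set c : ℝ → ℝ := fun x => max 0 (min x T) with hc
  have hccont : Continuous c := by fun_prop
  have hcmem : ∀ x, c x ∈ Set.Icc (0:ℝ) T :=
    fun x => ⟨le_max_left _ _, max_le hTle (min_le_right _ _)⟩
  have hcid : ∀ x ∈ Set.Icc (0:ℝ) T, c x = x := fun x hx => by
    simp [hc, min_eq_left hx.2, max_eq_right hx.1]
  set Kc : ℝ → ℝ := K ∘ c with hKc'
  set K'c : ℝ → ℝ := K' ∘ c with hK'c'
  set yc : ℝ → ℝ := y ∘ c with hyc'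
  set y'c : ℝ → ℝ := y' ∘ c with hy'c'
  have hKcontOn : ContinuousOn K (Set.Icc 0 T) := fun t ht => (hKdiff t ht).continuousWithinAt
  have hycontOn : ContinuousOn y (Set.Icc 0 T) := fun t ht => (hydiff t ht).continuousWithinAt
  have hKcc : Continuous Kc := hKcontOn.comp_continuous hccont hcmem
  have hK'cc : Continuous K'c := hK'cont.comp_continuous hccont hcmem
  have hycc : Continuous yc := hycontOn.comp_continuous hccont hcmem
  have hy'cc : Continuous y'c := hy'cont.comp_continuous hccont hcmem
  have hKder : ∀ t ∈ Set.Ioo (0:ℝ) T, HasDerivAt Kc (K'c t) t := by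
    intro t ht
    have hmem : t ∈ Set.Icc (0:ℝ) T := Set.Ioo_subset_Icc_self ht
    have hK : HasDerivAt K (K' t) t :=
      (hKdiff t hmem).hasDerivAt (Icc_mem_nhds ht.1 ht.2)
    have heq : Kc =ᶠ[nhds t] K := by
      filter_upwards [isOpen_Ioo.mem_nhds ht] with x hx
      simp [hKc', Function.comp, hcid x (Set.Ioo_subset_Icc_self hx)]
    have : K'c t = K' t := by simp [hK'c', Function.comp, hcid t hmem]
    rw [this]
    exact hK.congr_of_eventuallyEq heq
  have hyder : ∀ t ∈ Set.Ioo (0:ℝ) T, HasDerivAt yc (y'c t) t := by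
    intro t ht
    have hmem : t ∈ Set.Icc (0:ℝ) T := Set.Ioo_subset_Icc_self ht
    have hy : HasDerivAt y (y' t) t :=
      (hydiff t hmem).hasDerivAt (Icc_mem_nhds ht.1 ht.2)
    have heq : yc =ᶠ[nhds t] y := by
      filter_upwards [isOpen_Ioo.mem_nhds ht] with x hx
      simp [hyc', Function.comp, hcid x (Set.Ioo_subset_Icc_self hx)]
    have : y'c t = y' t := by simp [hy'c', Function.comp, hcid t hmem]
    rw [this]
    exact hy.congr_of_eventuallyEq heq
  have hKnn : ∀ t, 0 ≤ Kc t := fun t => hKnonneg _ (hcmem t)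
  have hK'np : ∀ t, K'c t ≤ 0 := fun t => hK'nonpos _ (hcmem t)
  have hmain := aux_coercive T hT Kc K'c yc y'c hKcc hK'cc hycc hy'cc hKder hyder hKnn hK'np
  have hLHS : (∫ t in (0:ℝ)..T, (∫ s in (0:ℝ)..t, K (t - s) * y' s) * y t)
      = ∫ t in (0:ℝ)..T, (∫ s in (0:ℝ)..t, Kc (t - s) * y'c s) * yc t := by
    apply intervalIntegral.integral_congr
    intro t ht
    rw [Set.uIcc_of_le hTle] at ht
    show (∫ s in (0:ℝ)..t, K (t - s) * y' s) * y t
      = (∫ s in (0:ℝ)..t, Kc (t - s) * y'c s) * yc t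
    have hyt : yc t = y t := by simp [hyc', Function.comp, hcid t ht]
    have hinner : (∫ s in (0:ℝ)..t, K (t - s) * y' s)
        = ∫ s in (0:ℝ)..t, Kc (t - s) * y'c s := by
      apply intervalIntegral.integral_congr
      intro s hs
      rw [Set.uIcc_of_le ht.1] at hs
      have h1 : t - s ∈ Set.Icc (0:ℝ) T :=
        ⟨by linarith [hs.2], by linarith [hs.1, ht.2]⟩
      have h2 : s ∈ Set.Icc (0:ℝ) T := ⟨hs.1, le_trans hs.2 ht.2⟩
      simp [hKc', hy'c', Function.comp, hcid _ h1, hcid _ h2]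
    rw [hyt, hinner]
  have hRHS : (∫ t in Set.Ioc (0:ℝ) T, |K t|) = ∫ x in (0:ℝ)..T, Kc x := by
    rw [intervalIntegral.integral_of_le hTle]
    apply setIntegral_congr_fun measurableSet_Ioc
    intro x hx
    have hmem : x ∈ Set.Icc (0:ℝ) T := Set.Ioc_subset_Icc_self hx
    show |K x| = Kc x
    have : Kc x = K x := by simp [hKc', Function.comp, hcid x hmem]
    rw [this, abs_of_nonneg (hKnonneg x hmem)]
  have hy0 : yc 0 = y 0 := by
    simp [hyc', Function.comp, hcid 0 (Set.left_mem_Icc.2 hTle)]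
  rw [hLHS, hRHS, ← hy0]
  exact hmain
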